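/- If σ is a 132-avoiding permutation of {1,…,n}, then mmp(0,0,1,0)(σ), the number of indices i such that some j < i has σ_j < σ_i, equals the number of nodes of the decreasing binary tree T(σ) that have a nonempty left subtree. -/

import Mathlib

/-- A permutation `σ` of `{1,…,n}` (as a permutation of `Fin n`) avoids the pattern 132 if
there are no indices `i < j < k` with `σ i < σ k < σ j`. -/
def Avoids132 (n : ℕ) (σ : Equiv.Perm (Fin n)) : Prop :=
  ∀ i j k : Fin n, i < j → j < k → ¬(σ i < σ k ∧ σ k < σ j)

/-- `mmp n a b c d σ` is the number of indices `i` matching the marked mesh pattern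
`MMP(a,b,c,d)` in `σ`: there are at least `a` indices `j > i` with `σ j > σ i`,
at least `b` indices `j < i` with `σ j > σ i`, at least `c` indices `j < i` with
`σ j < σ i`, and at least `d` indices `j > i` with `σ j < σ i`. -/
noncomputable def mmp (n a b c d : ℕ) (σ : Equiv.Perm (Fin n)) : ℕ :=
  Nat.card {i : Fin n |
    a ≤ Nat.card {j : Fin n | i < j ∧ σ i < σ j} ∧
    b ≤ Nat.card {j : Fin n | j < i ∧ σ i < σ j} ∧
    c ≤ Nat.card {j : Fin n | j < i ∧ σ j < σ i} ∧
    d ≤ Nat.card {j : Fin n | i < j ∧ σ j < σ i}}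

/-- The maximum of a nonempty list of naturals (via `foldr`) is an element of the list. -/
lemma foldr_max_mem : ∀ l : List ℕ, l ≠ [] → l.foldr max 0 ∈ l := by
  intro l
  induction l with
  | nil => simp
  | cons a as ih =>
    intro _
    by_cases h : as = []
    · subst h; simp
    · have hmem := ih h
      simp only [List.foldr_cons]
      rcases le_total (as.foldr max 0) a with h' | h'
      · rw [max_eq_left h']; exact List.mem_cons_self
      · rw [max_eq_right h']; exact List.mem_cons_of_mem a hmem

/-- The decreasing binary tree `T(w)` of a sequence `w` of distinct integers: `T` of the
empty sequence is the empty tree, and if `w = u · m · v` where `m` is the maximum entry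
of `w`, then `T(w)` has root labeled `m`, left subtree `T(u)` and right subtree `T(v)`. -/
def decTree : List ℕ → BinaryTree ℕ
  | [] => BinaryTree.nil
  | a :: as =>
    BinaryTree.node ((a :: as).foldr max 0)
      (decTree ((a :: as).take ((a :: as).idxOf ((a :: as).foldr max 0))))
      (decTree ((a :: as).drop ((a :: as).idxOf ((a :: as).foldr max 0) + 1)))
termination_by l => l.length
decreasing_by
  · have hmem : (a :: as).foldr max 0 ∈ a :: as := foldr_max_mem _ (by simp)
    have hlt : (a :: as).idxOf ((a :: as).foldr max 0) < (a :: as).length :=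
      List.idxOf_lt_length_iff.mpr hmem
    simp only [List.length_take]
    omega
  · simp only [List.length_drop, List.length_cons]
    omega

/-- The number of nodes of a binary tree having a nonempty left subtree. -/
def leftNodes {α : Type*} : BinaryTree α → ℕ
  | BinaryTree.nil => 0
  | BinaryTree.node _ BinaryTree.nil r => leftNodes r
  | BinaryTree.node _ (BinaryTree.node b ll lr) r => 1 + leftNodes (BinaryTree.node b ll lr) + leftNodes r

/-! ### Auxiliary lemmas -/

lemma le_foldr_max {x : ℕ} : ∀ {l : List ℕ}, x ∈ l → x ≤ l.foldr max 0 := by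
  intro l
  induction l with
  | nil => simp
  | cons a as ih =>
    intro hx
    rcases List.mem_cons.1 hx with rfl | hx
    · exact le_max_left _ _
    · exact le_trans (ih hx) (le_max_right _ _)

/-- ascent count of a list (counting right endpoints of ascents) -/
def asc : List ℕ → ℕ
  | [] => 0
  | [_] => 0
  | a :: b :: t => (if a < b then 1 else 0) + asc (b :: t)

lemma asc_append_cons : ∀ (u : List ℕ) (m : ℕ) (v : List ℕ),
    asc (u ++ m :: v) = asc (u ++ [m]) + asc (m :: v) := by
  intro u
  induction u with
  | nil => intro m v; simp [asc]
  | cons a u' ih =>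
    intro m v
    cases u' with
    | nil => simp [asc]
    | cons b u'' =>
      have := ih m v
      simp only [List.cons_append, List.append_eq, asc] at this ⊢
      omega

lemma asc_cons_of_le (m : ℕ) (v : List ℕ) (h : ∀ x ∈ v, x ≤ m) :
    asc (m :: v) = asc v := by
  cases v with
  | nil => rfl
  | cons b t =>
    have hb : ¬ m < b := not_lt.2 (h b (by simp))
    simp [asc, hb]

lemma asc_append_singleton : ∀ (u : List ℕ) (m : ℕ), u ≠ [] → (∀ x ∈ u, x < m) →
    asc (u ++ [m]) = asc u + 1 := by
  intro u
  induction u with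
  | nil => simp
  | cons a u' ih =>
    intro m _ hlt
    cases u' with
    | nil => simp [asc, hlt a (by simp)]
    | cons b u'' =>
      have := ih m (by simp) (fun x hx => hlt x (List.mem_cons_of_mem a hx))
      simp only [List.cons_append, List.append_eq, asc] at this ⊢
      omega

lemma decTree_nil : decTree [] = BinaryTree.nil := by rw [decTree]

lemma decTree_cons (a : ℕ) (as : List ℕ) :
    decTree (a :: as) =
      BinaryTree.node ((a :: as).foldr max 0)
        (decTree ((a :: as).take ((a :: as).idxOf ((a :: as).foldr max 0))))
        (decTree ((a :: as).drop ((a :: as).idxOf ((a :: as).foldr max 0) + 1))) := by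
  rw [decTree]

lemma leftNodes_decTree_aux : ∀ (N : ℕ) (l : List ℕ), l.length ≤ N →
    leftNodes (decTree l) = asc l := by
  intro N
  induction N with
  | zero =>
    intro l hl
    have : l = [] := List.length_eq_zero_iff.1 (Nat.le_zero.1 hl)
    subst this
    rw [decTree_nil]; rfl
  | succ N ih =>
    intro l hl
    match l with
    | [] => rw [decTree_nil]; rfl
    | a :: as =>
      rw [decTree_cons]
      set m := (a :: as).foldr max 0 with hm
      set k := (a :: as).idxOf m with hk
      set u := (a :: as).take k with hu
      set v := (a :: as).drop (k + 1) with hv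
      have hmem : m ∈ a :: as := foldr_max_mem _ (by simp)
      have hklt : k < (a :: as).length := List.idxOf_lt_length_iff.mpr hmem
      have hget : (a :: as)[k] = m := List.getElem_idxOf hklt
      have hsplit : a :: as = u ++ m :: v := by
        conv_lhs => rw [← List.take_append_drop k (a :: as)]
        rw [List.drop_eq_getElem_cons hklt, hget]
      have hmnotu : m ∉ u := by
        intro hmu
        have h1 : (a :: as).idxOf m = u.idxOf m := by
          conv_lhs => rw [hsplit]
          exact List.idxOf_append_of_mem hmu
        have h2 : u.idxOf m < u.length := List.idxOf_lt_length_iff.mpr hmu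
        have h3 : u.length = k := by
          rw [hu, List.length_take]; omega
        omega
      have hult : ∀ x ∈ u, x < m := by
        intro x hx
        have hxle : x ≤ m := le_foldr_max (List.mem_of_mem_take hx)
        rcases lt_or_eq_of_le hxle with h | h
        · exact h
        · exact absurd (h ▸ hx) hmnotu
      have hvle : ∀ x ∈ v, x ≤ m := fun x hx => le_foldr_max (List.mem_of_mem_drop hx)
      have hulen : u.length ≤ N := by
        have : u.length = k := by rw [hu, List.length_take]; omega
        simp only [List.length_cons] at hklt hl
        omega
      have hvlen : v.length ≤ N := by
        rw [hv, List.length_drop, List.length_cons]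
        simp only [List.length_cons] at hl hklt
        omega
      have iu := ih u hulen
      have iv := ih v hvlen
      rw [show a :: as = u ++ m :: v from hsplit]
      clear_value m k u v
      clear hsplit hmnotu hget hklt hmem hu hv hk hm hl ih hulen hvlen
      rw [asc_append_cons, asc_cons_of_le m v hvle]
      cases u with
      | nil =>
        rw [decTree_nil]
        simp only [leftNodes, asc, List.nil_append]
        omega
      | cons b u'' =>
        rw [asc_append_singleton _ m (by simp) hult]
        rw [decTree_cons b u'']
        simp only [leftNodes]
        rw [← decTree_cons b u'']
        omega

lemma leftNodes_decTree (l : List ℕ) : leftNodes (decTree l) = asc l :=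
  leftNodes_decTree_aux l.length l le_rfl

lemma asc_eq_card : ∀ l : List ℕ,
    asc l = ((Finset.range l.length).filter
      (fun i => 0 < i ∧ l.getD (i - 1) 0 < l.getD i 0)).card := by
  intro l
  induction l with
  | nil => simp [asc]
  | cons a as ih =>
    cases as with
    | nil => simp [asc, Finset.filter_singleton]
    | cons b t =>
      rw [Finset.card_filter] at ih ⊢
      simp only [List.length_cons] at ih ⊢
      rw [Finset.sum_range_succ', Finset.sum_range_succ'] at *
      simp only [List.getD_cons_succ, Nat.add_sub_cancel, Nat.zero_lt_succ, true_and,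
        Nat.lt_irrefl, false_and, if_false, add_zero, Nat.sub_self, List.getD_cons_zero] at ih ⊢
      rw [show asc (a :: b :: t) = (if a < b then 1 else 0) + asc (b :: t) from rfl, ih]
      omega

lemma nat_card_setOf_fin {n : ℕ} (p : Fin n → Prop) [DecidablePred p] :
    Nat.card {i : Fin n | p i} = (Finset.univ.filter p).card := by
  rw [Nat.card_coe_set_eq, Set.ncard_eq_toFinset_card', Set.toFinset_setOf]

/-- For a 132-avoiding permutation `σ` of `{1,…,n}`, `mmp(0,0,1,0)(σ)` — the number of
indices `i` such that some `j < i` has `σ j < σ i` — equals the number of nodes with a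
nonempty left subtree in the decreasing binary tree of the word `σ₁ … σₙ`
(written here with its 1-based values `(σ i : ℕ) + 1`). -/
theorem mmp0010_eq_leftNodes_decTree (n : ℕ) (σ : Equiv.Perm (Fin n))
    (hσ : Avoids132 n σ) :
    mmp n 0 0 1 0 σ = leftNodes (decTree (List.ofFn fun i : Fin n => (σ i : ℕ) + 1)) := by
  classical
  set l := List.ofFn (fun i : Fin n => (σ i : ℕ) + 1) with hl
  have hlen : l.length = n := by simp [hl]
  have hget : ∀ (i : ℕ) (h : i < n), l.getD i 0 = (σ ⟨i, h⟩ : ℕ) + 1 := by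
    intro i h
    rw [hl, List.getD_eq_getElem _ _ (by simpa using h), List.getElem_ofFn]
  rw [leftNodes_decTree, asc_eq_card, hlen]
  unfold mmp
  simp only [Nat.zero_le, true_and, and_true]
  -- key pointwise equivalence
  have hiff : ∀ i : Fin n,
      (1 ≤ Nat.card {j : Fin n | j < i ∧ σ j < σ i}) ↔
      (0 < (i : ℕ) ∧ l.getD ((i : ℕ) - 1) 0 < l.getD (i : ℕ) 0) := by
    intro i
    rw [Nat.one_le_iff_ne_zero, ← Nat.pos_iff_ne_zero, Nat.card_pos_iff]
    constructor
    · rintro ⟨⟨⟨j, hj1, hj2⟩⟩, -⟩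
      have hji : (j : ℕ) < (i : ℕ) := hj1
      have hi0 : 0 < (i : ℕ) := lt_of_le_of_lt (Nat.zero_le _) hji
      have hpred : (i : ℕ) - 1 < n := lt_trans (by omega) i.isLt
      refine ⟨hi0, ?_⟩
      rw [hget _ hpred, hget _ i.isLt]
      have key : σ ⟨(i : ℕ) - 1, hpred⟩ < σ i := by
        by_contra h'
        push_neg at h'
        have hine : (⟨(i : ℕ) - 1, hpred⟩ : Fin n) ≠ i := by
          intro h
          have := congrArg Fin.val h
          simp only [Fin.mk_val] at this
          omega
        have hlt2 : σ i < σ ⟨(i : ℕ) - 1, hpred⟩ :=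
          lt_of_le_of_ne h' (fun h => hine (σ.injective h.symm))
        have hji1 : j < (⟨(i : ℕ) - 1, hpred⟩ : Fin n) := by
          rcases lt_or_eq_of_le (show (j : ℕ) ≤ (i : ℕ) - 1 by omega) with h | h
          · exact h
          · exfalso
            have hje : j = (⟨(i : ℕ) - 1, hpred⟩ : Fin n) := Fin.ext h
            rw [hje] at hj2
            exact absurd hj2 (not_lt.2 (le_of_lt hlt2))
        have hi1i : (⟨(i : ℕ) - 1, hpred⟩ : Fin n) < i := by
          rw [Fin.lt_def]; simp only [Fin.mk_val]; omega
        exact hσ j ⟨(i : ℕ) - 1, hpred⟩ i hji1 hi1i ⟨hj2, hlt2⟩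
      rw [Fin.lt_def] at key
      simp only [Fin.eta]
      omega
    · rintro ⟨hi0, hlt⟩
      have hpred : (i : ℕ) - 1 < n := lt_trans (by omega) i.isLt
      rw [hget _ hpred, hget _ i.isLt] at hlt
      refine ⟨⟨⟨⟨(i : ℕ) - 1, hpred⟩, ?_, ?_⟩⟩, Set.toFinite _⟩
      · simp only [Fin.lt_def]; omega
      · have : σ ⟨(i : ℕ) - 1, hpred⟩ < σ ⟨(i : ℕ), i.isLt⟩ := by
          rw [Fin.lt_def]; omega
        simpa using this
  rw [nat_card_setOf_fin]
  apply Finset.card_bij (fun (i : Fin n) _ => (i : ℕ))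
  · intro i hi
    simp only [Finset.mem_filter, Finset.mem_univ, true_and] at hi
    simp only [Finset.mem_filter, Finset.mem_range]
    exact ⟨i.isLt, (hiff i).mp hi⟩
  · intro i _ j _ h
    exact Fin.ext h
  · intro b hb
    simp only [Finset.mem_filter, Finset.mem_range] at hb
    refine ⟨⟨b, hb.1⟩, ?_, rfl⟩
    simp only [Finset.mem_filter, Finset.mem_univ, true_and]
    exact (hiff ⟨b, hb.1⟩).mpr hb.2
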